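/- arXiv:2511.03297 — 2 statements merged into one kernel-verified Lean document; each statement's English description precedes it below -/
import Mathlib

section
/- Let Q be the generator matrix of a continuous-time Markov chain on a finite state space (i.e., Q has nonnegative off-diagonal entries and each column sums to zero), and suppose the eigenspace of Q associated with eigenvalue 0 is one-dimensional. Then every nonzero eigenvalue of Q has strictly negative real part. -/
/-- A generator matrix (column convention) with one-dimensional kernel has all
nonzero eigenvalues with strictly negative real part. -/
theorem stmt0 {p : ℕ} (Q : Matrix (Fin p) (Fin p) ℝ)
    (hoff : ∀ i j, i ≠ j → 0 ≤ Q i j)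
    (hcol : ∀ j, ∑ i, Q i j = 0)
    (hker : Module.finrank ℝ (LinearMap.ker (Matrix.toLin' Q)) = 1) :
    ∀ (μ : ℂ) (v : Fin p → ℂ), v ≠ 0 →
      (Q.map (fun a => (a : ℂ))).mulVec v = μ • v → μ ≠ 0 → μ.re < 0 := by
  intro μ v hv heig hμ
  set Qc : Matrix (Fin p) (Fin p) ℂ := Q.map (fun a => (a : ℂ)) with hQc
  -- det (Qc - μ • 1) = 0
  have hM : (Qc - μ • 1).mulVec v = 0 := by
    rw [Matrix.sub_mulVec, Matrix.smul_mulVec, Matrix.one_mulVec, heig, sub_self]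
  have hdet : (Qc - μ • 1).det = 0 := by
    rw [← Matrix.exists_mulVec_eq_zero_iff]
    exact ⟨v, hv, hM⟩
  have hdetT : (Matrix.transpose (Qc - μ • 1)).det = 0 := by rw [Matrix.det_transpose]; exact hdet
  obtain ⟨w, hw, hweq⟩ := (Matrix.exists_mulVec_eq_zero_iff).2 hdetT
  -- w is an eigenvector of the transpose
  have hweig : ∀ j, ∑ i, (Q i j : ℂ) * w i = μ * w j := by
    intro j
    have h0 := congrFun hweq j
    rw [Matrix.transpose_sub, Matrix.transpose_smul, Matrix.transpose_one] at h0
    simp only [Matrix.sub_mulVec, Matrix.smul_mulVec, Matrix.one_mulVec,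
      Pi.sub_apply, Pi.smul_apply, Pi.zero_apply, smul_eq_mul] at h0
    rw [sub_eq_zero] at h0
    rw [← h0]
    simp [Matrix.mulVec, dotProduct, Matrix.transpose_apply, hQc, Matrix.map_apply]
  -- pick j maximizing |w j|
  have hpne : (Finset.univ : Finset (Fin p)).Nonempty := by
    by_contra h
    apply hw
    ext i
    exact absurd (Finset.mem_univ i) (fun hi => h ⟨i, hi⟩)
  obtain ⟨j, -, hj⟩ := Finset.exists_max_image Finset.univ (fun i => ‖w i‖) hpne
  have hwj : ‖w j‖ ≠ 0 := by
    intro h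
    apply hw
    ext i
    have := hj i (Finset.mem_univ i)
    have : ‖w i‖ = 0 := le_antisymm (h ▸ this) (norm_nonneg _)
    simpa using this
  have hwjpos : 0 < ‖w j‖ := lt_of_le_of_ne (norm_nonneg _) (Ne.symm hwj)
  -- diagonal entry is nonpositive
  have hdiag : Q j j ≤ 0 := by
    have h1 : Q j j = -∑ i ∈ Finset.univ.erase j, Q i j := by
      have := hcol j
      rw [← Finset.add_sum_erase _ _ (Finset.mem_univ j)] at this
      linarith
    have h2 : 0 ≤ ∑ i ∈ Finset.univ.erase j, Q i j :=
      Finset.sum_nonneg fun i hi => hoff i j (Finset.ne_of_mem_erase hi)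
    linarith
  -- key Gershgorin estimate
  have key : (μ - (Q j j : ℂ)) * w j = ∑ i ∈ Finset.univ.erase j, (Q i j : ℂ) * w i := by
    have h := hweig j
    rw [← Finset.add_sum_erase _ _ (Finset.mem_univ j)] at h
    linear_combination -h
  have habs : ‖μ - (Q j j : ℂ)‖ * ‖w j‖
      ≤ (-(Q j j)) * ‖w j‖ := by
    calc ‖μ - (Q j j : ℂ)‖ * ‖w j‖
        = ‖(μ - (Q j j : ℂ)) * w j‖ := (norm_mul _ _).symm
      _ = ‖∑ i ∈ Finset.univ.erase j, (Q i j : ℂ) * w i‖ := by rw [key]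
      _ ≤ ∑ i ∈ Finset.univ.erase j, ‖(Q i j : ℂ) * w i‖ :=
          norm_sum_le _ _
      _ ≤ ∑ i ∈ Finset.univ.erase j, Q i j * ‖w j‖ := by
          apply Finset.sum_le_sum
          intro i hi
          rw [norm_mul, Complex.norm_of_nonneg (hoff i j (Finset.ne_of_mem_erase hi))]
          exact mul_le_mul_of_nonneg_left (hj i (Finset.mem_univ i))
            (hoff i j (Finset.ne_of_mem_erase hi))
      _ = (∑ i ∈ Finset.univ.erase j, Q i j) * ‖w j‖ := by
          rw [Finset.sum_mul]
      _ = (-(Q j j)) * ‖w j‖ := by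
          have := hcol j
          rw [← Finset.add_sum_erase _ _ (Finset.mem_univ j)] at this
          have : ∑ i ∈ Finset.univ.erase j, Q i j = -(Q j j) := by linarith
          rw [this]
  have hr : ‖μ - (Q j j : ℂ)‖ ≤ -(Q j j) :=
    le_of_mul_le_mul_right habs hwjpos
  -- conclude
  by_contra hre
  push_neg at hre
  have hsq : (μ.re - Q j j)^2 + μ.im^2 ≤ (Q j j)^2 := by
    have h1 : ‖μ - (Q j j : ℂ)‖ ^ 2 ≤ (-(Q j j))^2 := by
      apply pow_le_pow_left₀ (norm_nonneg _) hr
    rw [Complex.sq_norm, Complex.normSq_apply] at h1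
    simp only [Complex.sub_re, Complex.ofReal_re, Complex.sub_im, Complex.ofReal_im, sub_zero] at h1
    nlinarith [h1]
  have hre0 : μ.re = 0 ∧ μ.im = 0 := by
    constructor <;> nlinarith [sq_nonneg μ.re, sq_nonneg μ.im, mul_nonneg hre (neg_nonneg.mpr hdiag)]
  exact hμ (Complex.ext hre0.1 hre0.2)
end

section
/- Let V : D → ℝ≥0 be C¹ on an open set D ⊆ ℝ^n containing a compact set M, with V = 0 exactly on M, V̇(x) := ∇V(x)ᵀ f(x) ≤ -γ₁ d_M(x)² on D, and ‖∇V(x)‖ ≤ γ₂ d_M(x) on D, where d_M(x) = inf_{y ∈ M} ‖x − y‖. Let W(z) = zᵀ P z be a Lyapunov function for ż = (1/ε) A z with A Hurwitz, P A + AᵀP = -R, R ≻ 0. Then for the coupled system ẋ = f(x) + g₁(x,z), ε ż = A z + ε g₂(x,z), with g₁, g₂ Lipschitz in (x,z) and g₁(x,0) = 0, g₂(x*,0) = 0 for x* ∈ M, the weighted sum ν(x,z) = (1−θ)V(x) + θ W(z) satisfies, for suitable θ ∈ (0,1) and all sufficiently small ε > 0, ν̇(x,z) ≤ -c (d_M(x)²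 + ‖z‖²) for some c > 0 on a neighborhood of M × {0}. -/
set_option maxHeartbeats 1000000



open Matrix RealInnerProductSpace

lemma inner_toEuclideanLin {k : ℕ} (M : Matrix (Fin k) (Fin k) ℝ)
    (x y : EuclideanSpace ℝ (Fin k)) :
    ⟪x, Matrix.toEuclideanLin M y⟫ =
      (WithLp.equiv 2 (Fin k → ℝ) x) ⬝ᵥ (M *ᵥ (WithLp.equiv 2 (Fin k → ℝ) y)) := by
  simp [PiLp.inner_apply, dotProduct, Matrix.toEuclideanLin_apply]
  exact Finset.sum_congr rfl fun _ _ => mul_comm _ _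

lemma lyap_identity {k : ℕ} (A P R : Matrix (Fin k) (Fin k) ℝ)
    (h : P * A + Aᵀ * P = -R) (z : EuclideanSpace ℝ (Fin k)) :
    ⟪z, Matrix.toEuclideanLin P (Matrix.toEuclideanLin A z)⟫ +
      ⟪Matrix.toEuclideanLin A z, Matrix.toEuclideanLin P z⟫ =
      -⟪z, Matrix.toEuclideanLin R z⟫ := by
  set x := WithLp.equiv 2 (Fin k → ℝ) z with hx
  have h1 : ⟪z, Matrix.toEuclideanLin P (Matrix.toEuclideanLin A z)⟫
      = x ⬝ᵥ ((P * A) *ᵥ x) := by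
    rw [inner_toEuclideanLin]
    congr 1
    rw [← Matrix.mulVec_mulVec]
    rfl
  have h2 : ⟪Matrix.toEuclideanLin A z, Matrix.toEuclideanLin P z⟫
      = x ⬝ᵥ ((Aᵀ * P) *ᵥ x) := by
    have : ⟪Matrix.toEuclideanLin A z, Matrix.toEuclideanLin P z⟫
        = (A *ᵥ x) ⬝ᵥ (P *ᵥ x) := by
      simp [PiLp.inner_apply, dotProduct, Matrix.toEuclideanLin_apply]
      exact Finset.sum_congr rfl fun _ _ => mul_comm _ _
    rw [this]
    conv_rhs => rw [← Matrix.mulVec_mulVec, Matrix.dotProduct_mulVec, Matrix.vecMul_transpose]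
  have h3 : ⟪z, Matrix.toEuclideanLin R z⟫ = x ⬝ᵥ (R *ᵥ x) := inner_toEuclideanLin R z z
  rw [h1, h2, h3, ← dotProduct_add, ← Matrix.add_mulVec, h, Matrix.neg_mulVec,
    dotProduct_neg]

lemma posdef_inner_pos {k : ℕ} {R : Matrix (Fin k) (Fin k) ℝ} (hR : R.PosDef)
    {z : EuclideanSpace ℝ (Fin k)} (hz : z ≠ 0) :
    0 < ⟪z, Matrix.toEuclideanLin R z⟫ := by
  rw [inner_toEuclideanLin]
  have hx : (WithLp.equiv 2 (Fin k → ℝ)) z ≠ 0 := by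
    intro h
    apply hz
    ext i
    have := congrFun h i
    simpa using this
  have := hR.re_dotProduct_pos hx
  simpa using this

lemma posdef_lower_bound {k : ℕ} {R : Matrix (Fin k) (Fin k) ℝ} (hR : R.PosDef) :
    ∃ lam > (0:ℝ), ∀ z : EuclideanSpace ℝ (Fin k),
      lam * ‖z‖ ^ 2 ≤ ⟪z, Matrix.toEuclideanLin R z⟫ := by
  by_cases hns : Nontrivial (EuclideanSpace ℝ (Fin k))
  · haveI := hns
    have hq : Continuous fun z : EuclideanSpace ℝ (Fin k) =>
        ⟪z, Matrix.toEuclideanLin R z⟫ :=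
      continuous_id.inner ((Matrix.toEuclideanLin R).continuous_of_finiteDimensional)
    have hsph : (Metric.sphere (0 : EuclideanSpace ℝ (Fin k)) 1).Nonempty :=
      NormedSpace.sphere_nonempty.mpr zero_le_one
    obtain ⟨u, hu, humin⟩ := (isCompact_sphere (0 : EuclideanSpace ℝ (Fin k)) 1).exists_isMinOn
      hsph hq.continuousOn
    have hu1 : ‖u‖ = 1 := by simpa using hu
    have hupos : 0 < ⟪u, Matrix.toEuclideanLin R u⟫ :=
      posdef_inner_pos hR (by intro h; rw [h] at hu1; simp at hu1)
    refine ⟨_, hupos, fun z => ?_⟩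
    rcases eq_or_ne z 0 with rfl | hz
    · simp
    · set w : EuclideanSpace ℝ (Fin k) := ‖z‖⁻¹ • z with hw
      have hnz : (0:ℝ) < ‖z‖ := norm_pos_iff.mpr hz
      have hw1 : ‖w‖ = 1 := by
        rw [hw, norm_smul]
        simp [abs_of_pos (inv_pos.mpr hnz), inv_mul_cancel₀ hnz.ne']
      have hmem : w ∈ Metric.sphere (0 : EuclideanSpace ℝ (Fin k)) 1 := by
        simpa using hw1
      have hle := humin hmem
      have hzw : z = ‖z‖ • w := by
        rw [hw, smul_smul, mul_inv_cancel₀ hnz.ne', one_smul]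
      have hscale : ⟪z, Matrix.toEuclideanLin R z⟫
          = ‖z‖ ^ 2 * ⟪w, Matrix.toEuclideanLin R w⟫ := by
        conv_lhs => rw [hzw]
        rw [_root_.map_smul, real_inner_smul_left, real_inner_smul_right]
        ring
      rw [hscale]
      have : ⟪u, Matrix.toEuclideanLin R u⟫ ≤ ⟪w, Matrix.toEuclideanLin R w⟫ := hle
      nlinarith [sq_nonneg ‖z‖]
  · refine ⟨1, one_pos, fun z => ?_⟩
    have hz : z = 0 := by
      by_contra h
      exact hns ⟨z, 0, h⟩
    subst hz
    simp

lemma fderiv_quadratic {k : ℕ} (CP : EuclideanSpace ℝ (Fin k) →L[ℝ] EuclideanSpace ℝ (Fin k))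
    (z v : EuclideanSpace ℝ (Fin k)) :
    fderiv ℝ (fun z => ⟪z, CP z⟫) z v = ⟪z, CP v⟫ + ⟪v, CP z⟫ := by
  rw [fderiv_inner_apply ℝ differentiableAt_fun_id CP.differentiableAt v]
  rw [fderiv_fun_id, CP.fderiv]
  simp

/-- Composite Lyapunov function for the singularly perturbed system
`ẋ = f(x) + g₁(x,z)`, `ε ż = A z + ε g₂(x,z)`: for a suitable weight `θ` and all
sufficiently small `ε`, `ν = (1-θ)V + θW` has derivative bounded by
`-c (d_M(x)² + ‖z‖²)` on a neighborhood of `M × {0}`. -/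
theorem stmt14 {n k : ℕ}
    (Mset : Set (EuclideanSpace ℝ (Fin n))) (hMc : IsCompact Mset) (hMne : Mset.Nonempty)
    (D : Set (EuclideanSpace ℝ (Fin n))) (hD : IsOpen D) (hMD : Mset ⊆ D)
    (V : EuclideanSpace ℝ (Fin n) → ℝ) (hV : ContDiffOn ℝ 1 V D)
    (hVnonneg : ∀ x ∈ D, 0 ≤ V x) (hVzero : ∀ x ∈ D, (V x = 0 ↔ x ∈ Mset))
    (f : EuclideanSpace ℝ (Fin n) → EuclideanSpace ℝ (Fin n))
    (γ₁ γ₂ : ℝ) (hγ₁ : 0 < γ₁) (hγ₂ : 0 < γ₂)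
    (hVdot : ∀ x ∈ D, fderiv ℝ V x (f x) ≤ -γ₁ * (Metric.infDist x Mset) ^ 2)
    (hVgrad : ∀ x ∈ D, ‖fderiv ℝ V x‖ ≤ γ₂ * Metric.infDist x Mset)
    (A R P : Matrix (Fin k) (Fin k) ℝ)
    (hHurwitz : ∀ (μ : ℂ) (v : Fin k → ℂ), v ≠ 0 →
      (A.map (fun a => (a : ℂ))).mulVec v = μ • v → μ.re < 0)
    (hR : R.PosDef) (hP : P.PosDef) (hLyap : P * A + Aᵀ * P = -R)
    (W : EuclideanSpace ℝ (Fin k) → ℝ)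
    (hW : ∀ z, W z = ⟪z, Matrix.toEuclideanLin P z⟫)
    (g₁ : EuclideanSpace ℝ (Fin n) × EuclideanSpace ℝ (Fin k) → EuclideanSpace ℝ (Fin n))
    (g₂ : EuclideanSpace ℝ (Fin n) × EuclideanSpace ℝ (Fin k) → EuclideanSpace ℝ (Fin k))
    (L : NNReal) (hLf : LipschitzWith L f) (hLg₁ : LipschitzWith L g₁)
    (hLg₂ : LipschitzWith L g₂)
    (hg₁0 : ∀ x, g₁ (x, 0) = 0) (hg₂0 : ∀ x ∈ Mset, g₂ (x, 0) = 0) :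
    ∃ θ : ℝ, 0 < θ ∧ θ < 1 ∧ ∃ εstar > (0:ℝ), ∀ ε : ℝ, 0 < ε → ε < εstar →
      ∃ c > (0:ℝ), ∃ N ∈ nhdsSet (Mset ×ˢ ({0} : Set (EuclideanSpace ℝ (Fin k)))),
        N ⊆ D ×ˢ (Set.univ : Set (EuclideanSpace ℝ (Fin k))) ∧
        ∀ q ∈ N,
          (1 - θ) * fderiv ℝ V q.1 (f q.1 + g₁ q) +
            θ * fderiv ℝ W q.2 (ε⁻¹ • (Matrix.toEuclideanLin A q.2) + g₂ q)
          ≤ -c * ((Metric.infDist q.1 Mset) ^ 2 + ‖q.2‖ ^ 2) := by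
  classical
  obtain ⟨lam, hlam, hlamle⟩ := posdef_lower_bound hR
  set CP : EuclideanSpace ℝ (Fin k) →L[ℝ] EuclideanSpace ℝ (Fin k) :=
    LinearMap.toContinuousLinearMap (Matrix.toEuclideanLin P) with hCP
  have hCPlin : ∀ w, CP w = Matrix.toEuclideanLin P w := fun w => rfl
  obtain ⟨KP, hKPdef⟩ : ∃ t : ℝ, t = ‖CP‖ := ⟨_, rfl⟩
  have hKP0 : (0:ℝ) ≤ KP := by rw [hKPdef]; exact norm_nonneg _
  have hL0 : (0:ℝ) ≤ (L : ℝ) := L.coe_nonneg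
  obtain ⟨B, hBdef⟩ : ∃ t : ℝ, t = (γ₂ * (L:ℝ) / 2 + KP * (L:ℝ)) ^ 2 / γ₁ := ⟨_, rfl⟩
  have hB0 : (0:ℝ) ≤ B := by rw [hBdef]; positivity
  refine ⟨1/2, by norm_num, by norm_num, lam / (2 * (B + KP * (L:ℝ) + 1)), by positivity, ?_⟩
  intro ε hε hεs
  have hεinv : (0:ℝ) < ε⁻¹ := inv_pos.mpr hε
  have hεlam : 2 * (B + KP * (L:ℝ) + 1) ≤ ε⁻¹ * lam := by
    have hXpos : (0:ℝ) < 2 * (B + KP * (L:ℝ) + 1) := by positivity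
    have h1 : ε * (2 * (B + KP * (L:ℝ) + 1)) < lam := (lt_div_iff₀ hXpos).1 hεs
    have h2 : 2 * (B + KP * (L:ℝ) + 1) < lam / ε := (lt_div_iff₀ hε).2 (by linarith [h1])
    rw [← div_eq_inv_mul]
    exact h2.le
  refine ⟨min (γ₁/4) 1, lt_min (by positivity) one_pos,
    D ×ˢ (Set.univ : Set (EuclideanSpace ℝ (Fin k))),
    (hD.prod isOpen_univ).mem_nhdsSet.mpr (Set.prod_mono hMD (Set.subset_univ _)),
    subset_rfl, ?_⟩
  rintro ⟨x, z⟩ ⟨hxD, -⟩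
  show (1 - 1/2) * (fderiv ℝ V x) (f x + g₁ (x, z)) +
      (1/2) * (fderiv ℝ W z) (ε⁻¹ • (Matrix.toEuclideanLin A z) + g₂ (x, z))
    ≤ -(min (γ₁/4) 1) * ((Metric.infDist x Mset) ^ 2 + ‖z‖ ^ 2)
  obtain ⟨d, hdd⟩ : ∃ t : ℝ, t = Metric.infDist x Mset := ⟨_, rfl⟩
  obtain ⟨r, hrr⟩ : ∃ t : ℝ, t = ‖z‖ := ⟨_, rfl⟩
  rw [← hdd, ← hrr]
  have hd0 : (0:ℝ) ≤ d := by rw [hdd]; exact Metric.infDist_nonneg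
  have hr0 : (0:ℝ) ≤ r := by rw [hrr]; exact norm_nonneg _
  -- V part
  have ha : (fderiv ℝ V x) (f x) ≤ -γ₁ * d ^ 2 := by rw [hdd]; exact hVdot x hxD
  have hg1 : ‖g₁ (x, z)‖ ≤ (L:ℝ) * r := by
    have h := hLg₁.dist_le_mul (x, z) (x, 0)
    rw [hg₁0 x, dist_zero_right] at h
    refine h.trans ?_
    have hdz : dist (x, z) ((x, (0 : EuclideanSpace ℝ (Fin k)))) = r := by
      rw [Prod.dist_eq]
      simp [hrr, dist_eq_norm]
    rw [hdz]
  have hb : (fderiv ℝ V x) (g₁ (x, z)) ≤ (γ₂ * d) * ((L:ℝ) * r) := by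
    have h1 : (fderiv ℝ V x) (g₁ (x, z)) ≤ ‖fderiv ℝ V x‖ * ‖g₁ (x, z)‖ := by
      have := (fderiv ℝ V x).le_opNorm (g₁ (x, z))
      have h0 : (fderiv ℝ V x) (g₁ (x, z)) ≤ ‖(fderiv ℝ V x) (g₁ (x, z))‖ :=
        le_trans (le_abs_self _) (by rw [Real.norm_eq_abs])
      linarith
    refine h1.trans ?_
    have hg' : ‖fderiv ℝ V x‖ ≤ γ₂ * d := by rw [hdd]; exact hVgrad x hxD
    exact mul_le_mul hg' hg1 (norm_nonneg _) (mul_nonneg hγ₂.le hd0)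
  -- W part
  have hWfun : W = fun y => ⟪y, CP y⟫ := funext fun y => by rw [hW y]; rfl
  have hfW : ∀ v, (fderiv ℝ W z) v = ⟪z, CP v⟫ + ⟪v, CP z⟫ := fun v => by
    rw [hWfun]; exact fderiv_quadratic CP z v
  have hsplit : (fderiv ℝ W z) (ε⁻¹ • (Matrix.toEuclideanLin A z) + g₂ (x, z)) =
      ε⁻¹ * (⟪z, CP (Matrix.toEuclideanLin A z)⟫ + ⟪Matrix.toEuclideanLin A z, CP z⟫)
      + (⟪z, CP (g₂ (x, z))⟫ + ⟪g₂ (x, z), CP z⟫) := by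
    rw [hfW]
    rw [map_add, CP.map_smul, inner_add_right, inner_add_left, real_inner_smul_right,
      real_inner_smul_left]
    ring
  have hsval : ⟪z, CP (Matrix.toEuclideanLin A z)⟫ + ⟪Matrix.toEuclideanLin A z, CP z⟫
      = -⟪z, Matrix.toEuclideanLin R z⟫ := by
    rw [hCPlin, hCPlin]
    exact lyap_identity A P R hLyap z
  have hQ : lam * r ^ 2 ≤ ⟪z, Matrix.toEuclideanLin R z⟫ := by
    rw [hrr]; exact hlamle z
  have hzterm : ε⁻¹ * (⟪z, CP (Matrix.toEuclideanLin A z)⟫ + ⟪Matrix.toEuclideanLin A z, CP z⟫)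
      ≤ -(2 * (B + KP * (L:ℝ) + 1)) * r ^ 2 := by
    rw [hsval]
    have h1 : ε⁻¹ * (lam * r ^ 2) ≤ ε⁻¹ * ⟪z, Matrix.toEuclideanLin R z⟫ :=
      mul_le_mul_of_nonneg_left hQ hεinv.le
    have h2 : (2 * (B + KP * (L:ℝ) + 1)) * r ^ 2 ≤ (ε⁻¹ * lam) * r ^ 2 :=
      mul_le_mul_of_nonneg_right hεlam (sq_nonneg r)
    nlinarith [h1, h2]
  -- bound on g₂
  have hm : ‖g₂ (x, z)‖ ≤ (L:ℝ) * (d + r) := by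
    obtain ⟨xs, hxs, hdist⟩ := hMc.exists_infDist_eq_dist hMne x
    have h := hLg₂.dist_le_mul (x, z) (xs, 0)
    rw [hg₂0 xs hxs, dist_zero_right] at h
    refine h.trans ?_
    have hdm : dist (x, z) ((xs, (0 : EuclideanSpace ℝ (Fin k)))) = max (dist x xs) r := by
      rw [Prod.dist_eq, hrr]
      simp [dist_eq_norm]
    rw [hdm]
    have hmax : max (dist x xs) r ≤ d + r := by
      apply max_le
      · rw [hdd, hdist]; exact le_add_of_nonneg_right hr0
      · exact le_add_of_nonneg_left hd0
    exact mul_le_mul_of_nonneg_left hmax hL0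
  have hu : ⟪z, CP (g₂ (x, z))⟫ + ⟪g₂ (x, z), CP z⟫
      ≤ 2 * (KP * r) * ((L:ℝ) * (d + r)) := by
    have h1 : ⟪z, CP (g₂ (x, z))⟫ ≤ ‖z‖ * ‖CP (g₂ (x, z))‖ := real_inner_le_norm _ _
    have h2 : ⟪g₂ (x, z), CP z⟫ ≤ ‖g₂ (x, z)‖ * ‖CP z‖ := real_inner_le_norm _ _
    have h3 : ‖CP (g₂ (x, z))‖ ≤ KP * ‖g₂ (x, z)‖ := by
      rw [hKPdef]; exact CP.le_opNorm _
    have h4 : ‖CP z‖ ≤ KP * r := by rw [hrr, hKPdef]; exact CP.le_opNorm z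
    have hgn : (0:ℝ) ≤ ‖g₂ (x, z)‖ := norm_nonneg _
    have h5 : ‖z‖ * ‖CP (g₂ (x, z))‖ ≤ r * (KP * ‖g₂ (x, z)‖) := by
      rw [hrr]; exact mul_le_mul_of_nonneg_left h3 (hrr ▸ hr0)
    have h6 : ‖g₂ (x, z)‖ * ‖CP z‖ ≤ ‖g₂ (x, z)‖ * (KP * r) :=
      mul_le_mul_of_nonneg_left h4 hgn
    have h8 : (KP * r) * ‖g₂ (x, z)‖ ≤ (KP * r) * ((L:ℝ) * (d + r)) :=
      mul_le_mul_of_nonneg_left hm (mul_nonneg hKP0 hr0)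
    nlinarith [h1, h2, h5, h6, h8]
  -- Young's inequality
  have hyoung : (γ₂ * (L:ℝ) / 2 + KP * (L:ℝ)) * (d * r) ≤ γ₁ / 4 * d ^ 2 + B * r ^ 2 := by
    obtain ⟨C, hCdef⟩ : ∃ t : ℝ, t = γ₂ * (L:ℝ) / 2 + KP * (L:ℝ) := ⟨_, rfl⟩
    rw [← hCdef]
    have hy : C * (d * r) * γ₁ ≤ (γ₁ / 4 * d ^ 2) * γ₁ + C ^ 2 * r ^ 2 := by
      nlinarith [sq_nonneg (γ₁ * d - 2 * C * r)]
    have h2 : C * (d * r) ≤ ((γ₁ / 4 * d ^ 2) * γ₁ + C ^ 2 * r ^ 2) / γ₁ :=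
      (le_div_iff₀ hγ₁).2 hy
    have h3 : ((γ₁ / 4 * d ^ 2) * γ₁ + C ^ 2 * r ^ 2) / γ₁
        = γ₁ / 4 * d ^ 2 + C ^ 2 / γ₁ * r ^ 2 := by
      field_simp
    rw [h3] at h2
    rw [hBdef, ← hCdef]
    exact h2
  -- final assembly
  rw [map_add, hsplit]
  have hcle1 : min (γ₁/4) 1 ≤ γ₁/4 := min_le_left _ _
  have hcle2 : min (γ₁/4) 1 ≤ 1 := min_le_right _ _
  linarith [ha, hb, hzterm, hu, hyoung,
    mul_le_mul_of_nonneg_right hcle1 (sq_nonneg d),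
    mul_le_mul_of_nonneg_right hcle2 (sq_nonneg r)]
end
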